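/- Let H_C be an n-dimensional Hilbert space with orthonormal basis {|i⟩}, H a finite-dimensional Hilbert space, and F_1,...,F_n operator-valued functions in H over finite sets Δ_1,...,Δ_n. Define F over the product Δ_1×···×Δ_n by F(δ_1,...,δ_n)(∑_i |i⟩⊗|ψ_i⟩) = ∑_i (∏_{k≠i} λ_{kδ_k}) |i⟩⊗(F_i(δ_i)|ψ_i⟩), with λ_{kδ_k} = sqrt( tr(F_k(δ_k)†F_k(δ_k)) / ∑_{τ∈Δ_k} tr(F_k(τ)†F_k(τ)) ). Then ∑_{(δ_1,...,δ_n)} F(δ_1,...,δ_n)† F(δ_1,...,δ_n) ⊑ I_{H_C⊗H}; i.e., F is an operator-valued function in H_C ⊗ H. -/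

import Mathlib

noncomputable section
open scoped InnerProductSpace
open Finset

/-- Coordinate model of the tensor product `H_C ⊗ H` along a fixed orthonormal
basis of the `n`-dimensional coin space `H_C`. -/
abbrev TensorSp (n : ℕ) (H : Type*) [NormedAddCommGroup H] [InnerProductSpace ℂ H] : Type _ :=
  PiLp 2 (fun _ : Fin n => H)

variable {n : ℕ} {H : Type*} [NormedAddCommGroup H] [InnerProductSpace ℂ H]

/-- the pure tensor `c ⊗ ψ`. -/
def pureTensor (c : EuclideanSpace ℂ (Fin n)) (ψ : H) : TensorSp n H :=
  WithLp.toLp 2 (fun i => c i • ψ)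

/-- the block-diagonal operator `∑ᵢ |i⟩⟨i| ⊗ Uᵢ`, i.e. the guarded composition of
the `Uᵢ` along the computational basis of the coin space. -/
def blockDiag (U : Fin n → (H →ₗ[ℂ] H)) : TensorSp n H →ₗ[ℂ] TensorSp n H where
  toFun x := WithLp.toLp 2 (fun i => U i (x i))
  map_add' x y := by ext i; simp [map_add]
  map_smul' c x := by ext i; simp [map_smul]

/-- `A ⊗ B` in the coordinate model, `A` acting on the coin space. -/
def tensorOp (A : EuclideanSpace ℂ (Fin n) →ₗ[ℂ] EuclideanSpace ℂ (Fin n))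
    (B : H →ₗ[ℂ] H) : TensorSp n H →ₗ[ℂ] TensorSp n H where
  toFun x := WithLp.toLp 2 (fun i => ∑ b : Fin n, A (EuclideanSpace.single b 1) i • B (x b))
  map_add' x y := by
    ext i; simp [map_add, smul_add, Finset.sum_add_distrib]
  map_smul' c x := by
    ext i; simp [map_smul, Finset.smul_sum, smul_comm c]

/-- `A ⊗ I_H`. -/
def tensorLeft (A : EuclideanSpace ℂ (Fin n) →ₗ[ℂ] EuclideanSpace ℂ (Fin n)) :
    TensorSp n H →ₗ[ℂ] TensorSp n H :=
  tensorOp A LinearMap.id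

/-- A linear operator is unitary iff it preserves inner products and is bijective. -/
def IsUnitaryOp {E : Type*} [NormedAddCommGroup E] [InnerProductSpace ℂ E]
    (A : E →ₗ[ℂ] E) : Prop :=
  (∀ x y : E, ⟪A x, A y⟫_ℂ = ⟪x, y⟫_ℂ) ∧ Function.Bijective A

/-- Positive (semidefinite) operator. -/
def IsPosOp {E : Type*} [NormedAddCommGroup E] [InnerProductSpace ℂ E]
    (A : E →ₗ[ℂ] E) : Prop :=
  ∀ x : E, (⟪x, A x⟫_ℂ).im = 0 ∧ 0 ≤ (⟪x, A x⟫_ℂ).re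

/-- Löwner order `A ⊑ B`. -/
def Loewner {E : Type*} [NormedAddCommGroup E] [InnerProductSpace ℂ E]
    (A B : E →ₗ[ℂ] E) : Prop :=
  IsPosOp (B - A)

section guarded
variable [FiniteDimensional ℂ H] {Δ : Fin n → Type*} [∀ k, Fintype (Δ k)]

/-- the coefficients `λ_{kδ}`. -/
def lam (F : ∀ k, Δ k → (H →ₗ[ℂ] H)) (k : Fin n) (δ : Δ k) : ℝ :=
  Real.sqrt ((LinearMap.trace ℂ H (LinearMap.adjoint (F k δ) ∘ₗ F k δ)).re /
    ∑ τ : Δ k, (LinearMap.trace ℂ H (LinearMap.adjoint (F k τ) ∘ₗ F k τ)).re)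

/-- the guarded composition `□ᵢ |i⟩ → Fᵢ` of operator-valued functions, evaluated at
`⊕ᵢ δᵢ`. -/
def guardedComp (F : ∀ k, Δ k → (H →ₗ[ℂ] H)) (δ : ∀ k, Δ k) :
    TensorSp n H →ₗ[ℂ] TensorSp n H where
  toFun x := WithLp.toLp 2 (fun i => (∏ k ∈ Finset.univ.erase i, lam F k (δ k)) • F i (δ i) (x i))
  map_add' x y := by ext i; simp [map_add, smul_add]
  map_smul' c x := by
    ext i; simp [map_smul, smul_comm c]

end guarded

/-- partial trace over the coin space of an operator on `H_C ⊗ H`. -/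
def coinProj (i : Fin n) : TensorSp n H →ₗ[ℂ] H where
  toFun x := x i
  map_add' _ _ := rfl
  map_smul' _ _ := rfl

def coinIncl (i : Fin n) : H →ₗ[ℂ] TensorSp n H where
  toFun ψ := WithLp.toLp 2 (Pi.single i ψ)
  map_add' x y := by ext j; simp only [WithLp.ofLp_add, Pi.add_apply, Pi.single_add]
  map_smul' c x := by ext j; simp only [WithLp.ofLp_smul, Pi.smul_apply, Pi.single_smul, RingHom.id_apply]

def trCoin (A : TensorSp n H →ₗ[ℂ] TensorSp n H) : H →ₗ[ℂ] H :=
  ∑ i : Fin n, coinProj i ∘ₗ A ∘ₗ coinIncl i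

/-- the outer product `|x⟩⟨y|`. -/
def outer {E : Type*} [NormedAddCommGroup E] [InnerProductSpace ℂ E]
    (x y : E) : E →ₗ[ℂ] E :=
  ((innerSL ℂ y).toLinearMap).smulRight x



section aux
variable [FiniteDimensional ℂ H]

lemma trace_adjoint_comp_re_nonneg (A : H →ₗ[ℂ] H) :
    0 ≤ (LinearMap.trace ℂ H (LinearMap.adjoint A ∘ₗ A)).re := by
  classical
  set b := stdOrthonormalBasis ℂ H
  rw [LinearMap.trace_eq_matrix_trace ℂ b.toBasis, Matrix.trace]
  have hdiag : ∀ i, (LinearMap.toMatrix b.toBasis b.toBasis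
      (LinearMap.adjoint A ∘ₗ A)).diag i = ((‖A (b i)‖ : ℂ)) ^ 2 := by
    intro i
    rw [Matrix.diag_apply, LinearMap.toMatrix_apply, b.coe_toBasis_repr_apply,
      b.repr_apply_apply, b.coe_toBasis, LinearMap.comp_apply,
      LinearMap.adjoint_inner_right, inner_self_eq_norm_sq_to_K]
    norm_cast
  rw [Finset.sum_congr rfl fun i _ => hdiag i]
  rw [Complex.re_sum]
  refine Finset.sum_nonneg fun i _ => ?_
  have : ((‖A (b i)‖ : ℂ)) ^ 2 = ((‖A (b i)‖ ^ 2 : ℝ) : ℂ) := by push_cast; ring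
  rw [this, Complex.ofReal_re]
  positivity

variable {Δ : Fin n → Type*} [∀ k, Fintype (Δ k)]

lemma sum_lam_sq (F : ∀ k, Δ k → (H →ₗ[ℂ] H)) (k : Fin n)
    (hden : (∑ τ : Δ k,
      (LinearMap.trace ℂ H (LinearMap.adjoint (F k τ) ∘ₗ F k τ)).re) ≠ 0) :
    ∑ δ : Δ k, lam F k δ ^ 2 = 1 := by
  have hS : (0:ℝ) ≤ ∑ τ : Δ k,
      (LinearMap.trace ℂ H (LinearMap.adjoint (F k τ) ∘ₗ F k τ)).re :=
    Finset.sum_nonneg fun τ _ => trace_adjoint_comp_re_nonneg _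
  have h1 : ∀ δ : Δ k, lam F k δ ^ 2 =
      (LinearMap.trace ℂ H (LinearMap.adjoint (F k δ) ∘ₗ F k δ)).re /
      ∑ τ : Δ k, (LinearMap.trace ℂ H (LinearMap.adjoint (F k τ) ∘ₗ F k τ)).re := by
    intro δ
    exact Real.sq_sqrt (div_nonneg (trace_adjoint_comp_re_nonneg _) hS)
  rw [Finset.sum_congr rfl fun δ _ => h1 δ, ← Finset.sum_div, div_self hden]

/-- key factorization of a weighted sum over a pi type. -/
lemma sum_pi_weighted (w : ∀ k, Δ k → ℝ) (hw : ∀ k, ∑ d : Δ k, w k d = 1)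
    (i : Fin n) (g : Δ i → ℝ) :
    ∑ δ : (∀ k, Δ k), (∏ k ∈ Finset.univ.erase i, w k (δ k)) * g (δ i)
      = ∑ d : Δ i, g d := by
  classical
  set Hf : ∀ k, Δ k → ℝ := fun k d => if h : k = i then g (h ▸ d) else w k d with hHf
  have key : ∀ δ : (∀ k, Δ k),
      (∏ k ∈ Finset.univ.erase i, w k (δ k)) * g (δ i) = ∏ k, Hf k (δ k) := by
    intro δ
    rw [← Finset.mul_prod_erase Finset.univ (fun k => Hf k (δ k)) (Finset.mem_univ i)]
    rw [mul_comm]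
    congr 1
    · simp [hHf]
    · exact Finset.prod_congr rfl fun k hk => by
        simp [hHf, (Finset.mem_erase.mp hk).1]
  rw [Finset.sum_congr rfl fun δ _ => key δ, ← Fintype.prod_sum Hf,
    ← Finset.mul_prod_erase Finset.univ (fun k => ∑ d : Δ k, Hf k d)
      (Finset.mem_univ i)]
  have h1 : (∑ d : Δ i, Hf i d) = ∑ d : Δ i, g d := by
    refine Finset.sum_congr rfl fun d _ => ?_; simp [hHf]
  have h2 : ∀ k ∈ Finset.univ.erase i, (∑ d : Δ k, Hf k d) = 1 := by
    intro k hk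
    have hki := (Finset.mem_erase.mp hk).1
    rw [← hw k]
    exact Finset.sum_congr rfl fun d _ => by simp [hHf, hki]
  rw [h1, Finset.prod_congr rfl h2, Finset.prod_const_one, mul_one]

/-- consequence of the operator-valued-function hypothesis. -/
lemma ovf_norm_ineq {ι : Type*} [Fintype ι] (T : ι → (H →ₗ[ℂ] H))
    (h : Loewner (∑ δ : ι, LinearMap.adjoint (T δ) ∘ₗ T δ) LinearMap.id) (ψ : H) :
    ∑ δ : ι, ‖T δ ψ‖ ^ 2 ≤ ‖ψ‖ ^ 2 := by
  have h2 := (h ψ).2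
  have key : ⟪ψ, ((LinearMap.id - ∑ δ : ι, LinearMap.adjoint (T δ) ∘ₗ T δ :
      H →ₗ[ℂ] H)) ψ⟫_ℂ
      = ((‖ψ‖ ^ 2 - ∑ δ : ι, ‖T δ ψ‖ ^ 2 : ℝ) : ℂ) := by
    rw [LinearMap.sub_apply, inner_sub_right, LinearMap.id_apply,
      LinearMap.sum_apply, inner_sum]
    have : ∀ δ : ι, ⟪ψ, (LinearMap.adjoint (T δ) ∘ₗ T δ) ψ⟫_ℂ
        = ((‖T δ ψ‖ ^ 2 : ℝ) : ℂ) := fun δ => by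
      rw [LinearMap.comp_apply, LinearMap.adjoint_inner_right,
        inner_self_eq_norm_sq_to_K]
      norm_cast
    rw [Finset.sum_congr rfl fun δ _ => this δ, inner_self_eq_norm_sq_to_K,
      ← Complex.ofReal_sum]
    norm_cast
    exact (Complex.ofReal_sub _ _).symm
  rw [key, Complex.ofReal_re] at h2
  linarith

end aux

/-- the guarded composition of operator-valued functions is an
operator-valued function on `H_C ⊗ H`. -/
theorem guardedComp_isOperatorValuedFunction {n : ℕ} {H : Type*} [NormedAddCommGroup H]
    [InnerProductSpace ℂ H] [FiniteDimensional ℂ H]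
    {Δ : Fin n → Type*} [∀ k, Fintype (Δ k)] (F : ∀ k, Δ k → (H →ₗ[ℂ] H))
    (hovf : ∀ k, Loewner (∑ δ : Δ k, LinearMap.adjoint (F k δ) ∘ₗ F k δ) LinearMap.id)
    (hden : ∀ k, (∑ τ : Δ k,
      (LinearMap.trace ℂ H (LinearMap.adjoint (F k τ) ∘ₗ F k τ)).re) ≠ 0) :
    Loewner (∑ δ : (∀ k, Δ k),
        LinearMap.adjoint (guardedComp F δ) ∘ₗ guardedComp F δ) LinearMap.id := by
  classical
  intro x
  have key : ⟪x, ((LinearMap.id - ∑ δ : (∀ k, Δ k),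
      LinearMap.adjoint (guardedComp F δ) ∘ₗ guardedComp F δ :
      TensorSp n H →ₗ[ℂ] TensorSp n H)) x⟫_ℂ
      = (((∑ i, ‖x i‖ ^ 2) - ∑ i, ∑ d : Δ i, ‖F i d (x i)‖ ^ 2 : ℝ) : ℂ) := by
    rw [LinearMap.sub_apply, inner_sub_right, LinearMap.id_apply,
      LinearMap.sum_apply, inner_sum]
    have hxx : ⟪x, x⟫_ℂ = ((∑ i, ‖x i‖ ^ 2 : ℝ) : ℂ) := by
      rw [PiLp.inner_apply]
      rw [Finset.sum_congr rfl fun i _ => inner_self_eq_norm_sq_to_K (𝕜 := ℂ) (x i)]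
      norm_cast
    have hG : ∀ δ : (∀ k, Δ k),
        ⟪x, (LinearMap.adjoint (guardedComp F δ) ∘ₗ guardedComp F δ) x⟫_ℂ
        = ((∑ i, (∏ k ∈ Finset.univ.erase i, lam F k (δ k)) ^ 2
            * ‖F i (δ i) (x i)‖ ^ 2 : ℝ) : ℂ) := by
      intro δ
      rw [LinearMap.comp_apply, LinearMap.adjoint_inner_right, PiLp.inner_apply]
      have : ∀ i, ⟪guardedComp F δ x i, guardedComp F δ x i⟫_ℂ
          = (((∏ k ∈ Finset.univ.erase i, lam F k (δ k)) ^ 2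
              * ‖F i (δ i) (x i)‖ ^ 2 : ℝ) : ℂ) := by
        intro i
        have hreal : ‖guardedComp F δ x i‖ ^ 2
            = (∏ k ∈ Finset.univ.erase i, lam F k (δ k)) ^ 2
              * ‖F i (δ i) (x i)‖ ^ 2 := by
          show ‖(∏ k ∈ Finset.univ.erase i, lam F k (δ k)) • F i (δ i) (x i)‖ ^ 2 = _
          rw [norm_smul, mul_pow, Real.norm_eq_abs, sq_abs]
        rw [inner_self_eq_norm_sq_to_K]
        norm_cast
        exact congrArg Complex.ofReal hreal
      rw [Finset.sum_congr rfl fun i _ => this i]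
      norm_cast
    rw [hxx, Finset.sum_congr rfl fun δ _ => hG δ, ← Complex.ofReal_sum]
    rw [← Complex.ofReal_sub]
    congr 1
    have hswap : ∑ δ : (∀ k, Δ k), ∑ i,
        (∏ k ∈ Finset.univ.erase i, lam F k (δ k)) ^ 2 * ‖F i (δ i) (x i)‖ ^ 2
        = ∑ i, ∑ d : Δ i, ‖F i d (x i)‖ ^ 2 := by
      rw [Finset.sum_comm]
      refine Finset.sum_congr rfl fun i _ => ?_
      have := sum_pi_weighted (fun k d => lam F k d ^ 2)
        (fun k => sum_lam_sq F k (hden k)) i (fun d => ‖F i d (x i)‖ ^ 2)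
      rw [← this]
      refine Finset.sum_congr rfl fun δ _ => ?_
      rw [Finset.prod_pow]
    rw [hswap]
  constructor
  · rw [key, Complex.ofReal_im]
  · rw [key, Complex.ofReal_re, sub_nonneg]
    exact Finset.sum_le_sum fun i _ => ovf_norm_ineq (F i) (hovf i) (x i)
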